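/- (Correctness of online LZ factor detection.) Let S be a string of length n and let 1 ≤ i ≤ n be such that the character S[i] occurs in S[1..i−1]. Suppose ℓ* is the smallest integer ℓ ≥ 2 such that i + ℓ − 1 ≤ n and |lrs(S[1..i+ℓ−1])| < ℓ, and assume such ℓ* exists. Then S[i..i+ℓ*−2] has an occurrence in S starting at some position strictly less than i, and for every m with i + ℓ* − 1 ≤ m ≤ n, the string S[i..m] has no occurrence in S starting at a position strictly less than i. In other words, S[i..i+ℓ*−2] is the longest prefix of S[i..n] that occurs in S starting before position i. -/

import Mathlib

open List

variable {α : Type*}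

/-- `w` occurs in `S` starting at (1-indexed) position `a`. -/
def Occ (S w : List α) (a : ℕ) : Prop :=
  1 ≤ a ∧ a + w.length ≤ S.length + 1 ∧ (S.drop (a - 1)).take w.length = w

/-- `w` is a repeating suffix of `S`: a suffix of `S` that is a substring of `S[1..|S|-1]`. -/
def RepSuffix (S w : List α) : Prop := w <:+ S ∧ w <:+: S.dropLast

/-- `w` is a repeating prefix of `S`: a prefix of `S` that is a substring of `S[2..|S|]`. -/
def RepPrefix (S w : List α) : Prop := w <+: S ∧ w <:+: S.tail

/-- Length of the longest repeating suffix of `S`. -/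
def lrsLen [DecidableEq α] (S : List α) : ℕ :=
  Nat.findGreatest (fun l => S.drop (S.length - l) <:+: S.dropLast) S.length

/-- The longest repeating suffix of `S` (empty if none is nonempty). -/
def lrs [DecidableEq α] (S : List α) : List α := S.drop (S.length - lrsLen S)

/-- Length of the longest repeating prefix of `S`. -/
def lrpLen [DecidableEq α] (S : List α) : ℕ :=
  Nat.findGreatest (fun l => S.take l <:+: S.tail) S.length

/-- The longest repeating prefix of `S` (empty if none is nonempty). -/
def lrp [DecidableEq α] (S : List α) : List α := S.take (lrpLen S)

/-- `p ≥ 1` is a period of `w`: `w[x] = w[x+p]` for all `1 ≤ x ≤ |w| - p` (1-indexed). -/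
def IsPeriod (w : List α) (p : ℕ) : Prop :=
  1 ≤ p ∧ ∀ x, 1 ≤ x → x + p ≤ w.length → w[x - 1]? = w[x + p - 1]?

/-- `b` is a border of `w`: a proper prefix and proper suffix of `w`. -/
def IsBorder (w b : List α) : Prop := b <+: w ∧ b <:+ w ∧ b.length < w.length

/-- `b` is the longest border of `w`. -/
def IsLongestBorder (w b : List α) : Prop :=
  IsBorder w b ∧ ∀ b', IsBorder w b' → b'.length ≤ b.length

/-- `w` is closed: `|w| ≤ 1`, or the longest border of `w` occurs exactly twice in `w`,
namely only as a prefix and as a suffix. -/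
def ClosedWord (w : List α) : Prop :=
  w.length ≤ 1 ∨
    ∃ b, IsLongestBorder w b ∧ ∀ a, Occ w b a → a = 1 ∨ a = w.length - b.length + 1


lemma take_drop_infix' (L : List α) (k n : ℕ) : (L.drop k).take n <:+: L :=
  ((take_prefix n (L.drop k)).isInfix).trans (drop_suffix k L).isInfix

lemma infix_exists' {w L : List α} (h : w <:+: L) :
    ∃ k, k + w.length ≤ L.length ∧ (L.drop k).take w.length = w := by
  obtain ⟨s, t, rfl⟩ := h
  refine ⟨s.length, by simp, ?_⟩
  rw [List.append_assoc, List.drop_left, List.take_left]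

lemma lrs_length' [DecidableEq α] (T : List α) : (lrs T).length = lrsLen T := by
  have := Nat.findGreatest_le (P := fun l => T.drop (T.length - l) <:+: T.dropLast) T.length
  simp only [lrs, lrsLen, length_drop] at *
  omega

lemma lrsLen_le' [DecidableEq α] (T : List α) : lrsLen T ≤ T.length :=
  Nat.findGreatest_le _

lemma lrsLen_spec' [DecidableEq α] (T : List α) (h : 0 < lrsLen T) :
    T.drop (T.length - lrsLen T) <:+: T.dropLast :=
  (Nat.findGreatest_eq_iff.mp (rfl : lrsLen T = _)).2.1 (by omega)

lemma le_lrsLen' [DecidableEq α] (T : List α) (l : ℕ) (hl : l ≤ T.length)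
    (h : T.drop (T.length - l) <:+: T.dropLast) : l ≤ lrsLen T :=
  Nat.le_findGreatest hl h

/-- Correctness of online LZ factor detection: if `S[i]` occurs in `S[1..i-1]`
and `ℓ*` is the smallest `ℓ ≥ 2` with `i + ℓ - 1 ≤ n` and `|lrs (S[1..i+ℓ-1])| < ℓ`, then
`S[i..i+ℓ*-2]` occurs in `S` starting before `i`, and for every `m` with `i+ℓ*-1 ≤ m ≤ n`,
`S[i..m]` has no occurrence in `S` starting before `i`. -/
theorem online_LZ_factor_detection [DecidableEq α] (S : List α) (i l : ℕ)
    (hi1 : 1 ≤ i) (hi2 : i ≤ S.length)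
    (hchar : (S.drop (i - 1)).take 1 <:+: S.take (i - 1))
    (hl2 : 2 ≤ l) (hln : i + l - 1 ≤ S.length)
    (hlt : (lrs (S.take (i + l - 1))).length < l)
    (hmin : ∀ l', 2 ≤ l' → i + l' - 1 ≤ S.length →
      (lrs (S.take (i + l' - 1))).length < l' → l ≤ l') :
    (∃ a, a < i ∧ Occ S ((S.drop (i - 1)).take (l - 1)) a) ∧
    (∀ m, i + l - 1 ≤ m → m ≤ S.length →
      ¬ ∃ a, a < i ∧ Occ S ((S.drop (i - 1)).take (m - i + 1)) a) := by
  obtain ⟨i0, rfl⟩ : ∃ i0, i = i0 + 1 := ⟨i - 1, by omega⟩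
  obtain ⟨l0, rfl⟩ : ∃ l0, l = l0 + 2 := ⟨l - 2, by omega⟩
  have e1 : i0 + 1 + (l0 + 2) - 1 = i0 + l0 + 2 := by omega
  have e2 : i0 + 1 - 1 = i0 := by omega
  have e3 : l0 + 2 - 1 = l0 + 1 := by omega
  rw [e1] at hln hlt
  rw [e2] at hchar ⊢
  rw [e3]
  rw [lrs_length'] at hlt
  constructor
  · -- Part 1: existence of occurrence of the length-(l0+1) prefix before i
    rcases Nat.eq_zero_or_pos l0 with h0 | h0
    · subst h0
      simp only [Nat.zero_add] at *
      have hw : ((S.drop i0).take 1).length = 1 := by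
        simp [length_take, length_drop]; omega
      obtain ⟨k, hk1, hk2⟩ := infix_exists' hchar
      rw [hw] at hk1 hk2
      have hklen : k + 1 ≤ i0 := by
        have : (S.take i0).length = i0 ⊓ S.length := length_take
        omega
      refine ⟨k + 1, by omega, by omega, ?_, ?_⟩
      · rw [hw]; omega
      · rw [hw, Nat.add_sub_cancel, ← hk2, drop_take, take_take]
        congr 1
        omega
    · -- l0 ≥ 1 : use minimality at l' = l0 + 1
      have hTlen : (S.take (i0 + l0 + 1)).length = i0 + l0 + 1 := by
        rw [length_take]; omega
      have hnot : l0 + 1 ≤ lrsLen (S.take (i0 + l0 + 1)) := by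
        by_contra hcon
        push_neg at hcon
        have h5 : (lrs (S.take (i0 + 1 + (l0 + 1) - 1))).length < l0 + 1 := by
          rw [show i0 + 1 + (l0 + 1) - 1 = i0 + l0 + 1 from by omega, lrs_length']
          omega
        have := hmin (l0 + 1) (by omega) (by omega) h5
        omega
      have hLle : lrsLen (S.take (i0 + l0 + 1)) ≤ i0 + l0 + 1 := by
        have := lrsLen_le' (S.take (i0 + l0 + 1)); omega
      have hP := lrsLen_spec' (S.take (i0 + l0 + 1)) (by omega)
      rw [hTlen] at hP
      have hPlen : ((S.take (i0 + l0 + 1)).drop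
          (i0 + l0 + 1 - lrsLen (S.take (i0 + l0 + 1)))).length
          = lrsLen (S.take (i0 + l0 + 1)) := by
        rw [length_drop, hTlen]; omega
      have hdl : (S.take (i0 + l0 + 1)).dropLast = S.take (i0 + l0) := by
        rw [dropLast_eq_take, hTlen, take_take]
        congr 1
        omega
      rw [hdl] at hP
      obtain ⟨k, hk1, hk2⟩ := infix_exists' hP
      rw [hPlen] at hk1 hk2
      have hk1' : k + lrsLen (S.take (i0 + l0 + 1)) ≤ i0 + l0 := by
        have : (S.take (i0 + l0)).length = (i0 + l0) ⊓ S.length := length_take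
        omega
      rw [drop_take, take_take, drop_take,
        show lrsLen (S.take (i0 + l0 + 1)) ⊓ (i0 + l0 - k)
          = lrsLen (S.take (i0 + l0 + 1)) from by omega,
        show i0 + l0 + 1 - (i0 + l0 + 1 - lrsLen (S.take (i0 + l0 + 1)))
          = lrsLen (S.take (i0 + l0 + 1)) from by omega] at hk2
      have key := congrArg (List.drop (lrsLen (S.take (i0 + l0 + 1)) - (l0 + 1))) hk2
      rw [drop_take, drop_take, drop_drop, drop_drop,
        show lrsLen (S.take (i0 + l0 + 1)) - (lrsLen (S.take (i0 + l0 + 1)) - (l0 + 1))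
          = l0 + 1 from by omega,
        show i0 + l0 + 1 - lrsLen (S.take (i0 + l0 + 1))
            + (lrsLen (S.take (i0 + l0 + 1)) - (l0 + 1)) = i0 from by omega] at key
      have hwlen : ((S.drop i0).take (l0 + 1)).length = l0 + 1 := by
        simp [length_take, length_drop]; omega
      refine ⟨k + (lrsLen (S.take (i0 + l0 + 1)) - (l0 + 1)) + 1, by omega, by omega, ?_, ?_⟩
      · rw [hwlen]; omega
      · rw [hwlen, Nat.add_sub_cancel]
        exact key
  · -- Part 2: no occurrence of S[i..m] before i for m ≥ i + l - 1
    rintro m hm1 hm2 ⟨a, hai, ha1, ha2, ha3⟩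
    have hw : ((S.drop i0).take (m - (i0 + 1) + 1)).length = m - i0 := by
      simp [length_take, length_drop]; omega
    rw [hw] at ha2 ha3
    have key := congrArg (List.take (l0 + 2)) ha3
    rw [take_take, take_take,
      show (l0 + 2) ⊓ (m - i0) = l0 + 2 from by omega,
      show (l0 + 2) ⊓ (m - (i0 + 1) + 1) = l0 + 2 from by omega] at key
    have hTlen : (S.take (i0 + l0 + 2)).length = i0 + l0 + 2 := by
      rw [length_take]; omega
    have hdl : (S.take (i0 + l0 + 2)).dropLast = S.take (i0 + l0 + 1) := by
      rw [dropLast_eq_take, hTlen, take_take]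
      congr 1
      omega
    have hsuf : (S.take (i0 + l0 + 2)).drop ((S.take (i0 + l0 + 2)).length - (l0 + 2))
        = (S.drop i0).take (l0 + 2) := by
      rw [hTlen, show i0 + l0 + 2 - (l0 + 2) = i0 from by omega, drop_take]
      congr 1
      omega
    have hinf : (S.take (i0 + l0 + 2)).drop ((S.take (i0 + l0 + 2)).length - (l0 + 2))
        <:+: (S.take (i0 + l0 + 2)).dropLast := by
      rw [hsuf, hdl, ← key]
      have h2 : ((S.take (i0 + l0 + 1)).drop (a - 1)).take (l0 + 2)
          = (S.drop (a - 1)).take (l0 + 2) := by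
        rw [drop_take, take_take]
        congr 1
        omega
      rw [← h2]
      exact take_drop_infix' _ _ _
    have := le_lrsLen' (S.take (i0 + l0 + 2)) (l0 + 2) (by omega) hinf
    omega
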